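/- For 0 < γ < 1 and H = ⌊1/(1-γ)⌋ + 1, one has (γ² - γ^{2H+4})/(1-γ²) ≥ 2γ²/(5(1-γ)). -/

import Mathlib

lemma bern2 (y : ℝ) (hy : 0 ≤ y) : ∀ n : ℕ,
    1 + n * y + n * (n - 1) / 2 * y ^ 2 ≤ (1 + y) ^ n := by
  intro n
  induction n with
  | zero => norm_num
  | succ n ih =>
    have h1 : (0:ℝ) ≤ 1 + y := by linarith
    have h2 := mul_le_mul_of_nonneg_right ih h1
    have h3 : (0:ℝ) ≤ (n:ℝ) * ((n:ℝ) - 1) := by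
      rcases Nat.eq_zero_or_pos n with h | h
      · simp [h]
      · have : (1:ℝ) ≤ (n:ℝ) := by exact_mod_cast h
        nlinarith
    rw [pow_succ]
    push_cast
    ring_nf
    nlinarith [h2, mul_nonneg (mul_nonneg h3 hy) (sq_nonneg y)]

set_option maxHeartbeats 1000000 in
theorem stmt_5 (γ : ℝ) (h0 : 0 < γ) (h1 : γ < 1) (H : ℕ)
    (hH : H = ⌊1 / (1 - γ)⌋₊ + 1) :
    2 * γ ^ 2 / (5 * (1 - γ)) ≤ (γ ^ 2 - γ ^ (2 * H + 4)) / (1 - γ ^ 2) := by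
  have hg : 0 < 1 - γ := by linarith
  have hx : 1 / (1 - γ) < (H : ℝ) := by
    rw [hH]
    push_cast
    exact Nat.lt_floor_add_one _
  have hx1 : (1:ℝ) ≤ 1 / (1 - γ) := by
    rw [le_div_iff₀ hg]; linarith
  set y : ℝ := (1 - γ) / γ with hy_def
  have hy : 0 ≤ y := by positivity
  have h1y : 1 + y = 1 / γ := by rw [hy_def]; field_simp; ring
  have key := bern2 y hy H
  rw [h1y, one_div, inv_pow, ← one_div] at key
  -- H * y ≥ 1/γ
  have hHy : 1 / γ ≤ (H : ℝ) * y := by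
    have : 1 / γ = (1 / (1 - γ)) * y := by rw [hy_def]; field_simp
    rw [this]
    exact mul_le_mul_of_nonneg_right (le_of_lt hx) hy
  -- H*(H-1)*y^2 ≥ 1/γ
  have hH2 : 1 / γ ≤ (H : ℝ) * ((H : ℝ) - 1) * y ^ 2 := by
    have hx2 : γ / (1 - γ) ≤ (H : ℝ) - 1 := by
      have : γ / (1 - γ) = 1 / (1 - γ) - 1 := by field_simp; ring
      linarith [hx, this]
    have hstep : (1 / (1 - γ)) * (γ / (1 - γ)) * y ^ 2 ≤ (H : ℝ) * ((H : ℝ) - 1) * y ^ 2 := by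
      apply mul_le_mul_of_nonneg_right _ (sq_nonneg y)
      apply mul_le_mul (le_of_lt hx) hx2 (by positivity) (by positivity)
    have heq : (1 / (1 - γ)) * (γ / (1 - γ)) * y ^ 2 = 1 / γ := by
      rw [hy_def]; field_simp
    linarith
  have hpowH : 0 < γ ^ H := pow_pos h0 H
  -- 1/γ^H ≥ (2γ+3)/(2γ)
  have hlow : (2 * γ + 3) / (2 * γ) ≤ 1 / γ ^ H := by
    have : (2 * γ + 3) / (2 * γ) ≤ 1 + (H : ℝ) * y + (H : ℝ) * ((H : ℝ) - 1) / 2 * y ^ 2 := by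
      have h3 : (2 * γ + 3) / (2 * γ) = 1 + 1/γ + (1/γ)/2 := by field_simp; ring
      rw [h3]
      have : (H : ℝ) * ((H : ℝ) - 1) / 2 * y ^ 2 = ((H : ℝ) * ((H : ℝ) - 1) * y ^ 2) / 2 := by
        ring
      rw [this]
      linarith [hHy, hH2]
    linarith
  -- γ^H ≤ 2γ/(2γ+3)
  have ht : γ ^ H ≤ 2 * γ / (2 * γ + 3) := by
    have hd : 0 < (2 * γ + 3) / (2 * γ) := by positivity
    have h2 : 2 * γ / (2 * γ + 3) = 1 / ((2 * γ + 3) / (2 * γ)) := by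
      field_simp
    rw [h2]
    calc γ ^ H = 1 / (1 / γ ^ H) := by field_simp
    _ ≤ 1 / ((2 * γ + 3) / (2 * γ)) := by
        apply one_div_le_one_div_of_le hd hlow
  set t : ℝ := γ ^ H with ht_def
  have ht0 : 0 < t := hpowH
  have ht' : t * (2 * γ + 3) ≤ 2 * γ := by
    rw [div_eq_mul_inv] at ht
    have h3 : 0 < 2 * γ + 3 := by linarith
    calc t * (2 * γ + 3) ≤ (2 * γ / (2 * γ + 3)) * (2 * γ + 3) :=
      mul_le_mul_of_nonneg_right ht (le_of_lt h3)
    _ = 2 * γ := by field_simp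
  have hpow : γ ^ (2 * H + 4) = γ ^ 4 * t ^ 2 := by
    rw [ht_def, ← pow_mul, ← pow_add]
    ring_nf
  rw [hpow]
  have hden : 0 < 1 - γ ^ 2 := by nlinarith
  rw [div_le_div_iff₀ (by positivity) hden]
  have h3p : (0:ℝ) < 2 * γ + 3 := by linarith
  have hsq : t ^ 2 * (2 * γ + 3) ^ 2 ≤ 4 * γ ^ 2 := by
    nlinarith [mul_le_mul ht' ht' (by positivity) (by linarith)]
  have hp : (20:ℝ) * γ ^ 4 ≤ (3 - 2 * γ) * (2 * γ + 3) ^ 2 := by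
    nlinarith [sq_nonneg γ, sq_nonneg (1 - γ), mul_pos h0 h0,
      mul_pos (mul_pos h0 h0) h0, mul_nonneg (mul_nonneg h0.le h0.le) (mul_nonneg h0.le hg.le)]
  have hkey : 5 * γ ^ 2 * t ^ 2 ≤ 3 - 2 * γ := by
    have h3sq : (0:ℝ) < (2 * γ + 3) ^ 2 := by positivity
    rw [← mul_le_mul_iff_of_pos_right h3sq]
    calc 5 * γ ^ 2 * t ^ 2 * (2 * γ + 3) ^ 2 = 5 * γ ^ 2 * (t ^ 2 * (2 * γ + 3) ^ 2) := by ring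
    _ ≤ 5 * γ ^ 2 * (4 * γ ^ 2) := mul_le_mul_of_nonneg_left hsq (by positivity)
    _ = 20 * γ ^ 4 := by ring
    _ ≤ (3 - 2 * γ) * (2 * γ + 3) ^ 2 := hp
  nlinarith [mul_nonneg (mul_nonneg (sq_nonneg γ) hg.le) (sub_nonneg.2 hkey)]
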